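/- Let p: ℤ → ℤ be a function (a perversity) with p(n) ≤ 0 for all n. Let K and L be complexes of sheaves on a stratified space X such that for every stratum S, H^i(K)|_S = 0 and H^i(L)|_S = 0 for all i > p(dim S). Then for every stratum S, H^q(K ⊗^L L)|_S = 0 for all q > p(dim S). More precisely, using the Künneth spectral sequence E₂^{st} = ⊕_{a+b=t} Tor_{−s}(H^a(K), H^b(L)) ⇒ H^{s+t}(K ⊗^L L), the restriction to S of each E₂-term vanishes whenever s + t > p(dim S). -/
import Mathlib

/-- sub-additivity of a non-positive perversity under derived
tensor product (Künneth).  We model the constructible complexes `K`, `L` on a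
stratified variety `X = ∐ S` through the vanishing predicates of their
cohomology sheaves restricted to the strata: `VK i σ` (resp. `VL i σ`, resp.
`VKL i σ`) means `𝓗^i(K)|_σ = 0` (resp. for `L`, resp. for `K ⊗^L L`), and
`TorV n a b σ` means `Tor_n(𝓗^a(K), 𝓗^b(L))|_σ = 0`.  If `K` and `L` lie in
`^pD^{≤0}`, i.e. `𝓗^i(K)|_S = 0 = 𝓗^i(L)|_S` for `i > p(dim S)`, then every
Künneth `E₂`-term `⊕_{a+b=t} Tor_{-s}(𝓗^a K, 𝓗^b L)` with `s + t > p(dim S)`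
vanishes on `S`, and consequently `𝓗^q(K ⊗^L L)|_S = 0` for `q > p(dim S)`. -/
theorem kunneth_perversity_subadditive
    (Strata : Type*) (dim : Strata → ℕ)
    (p : ℤ → ℤ) (hp : ∀ n, p n ≤ 0)
    (VK VL VKL : ℤ → Strata → Prop) (TorV : ℤ → ℤ → ℤ → Strata → Prop)
    -- `Tor_n = 0` for `n < 0`
    (hTorNeg : ∀ n a b σ, n < 0 → TorV n a b σ)
    -- `Tor` is a bifunctor, so it vanishes on a stratum as soon as one of its
    -- arguments does
    (hTorZero : ∀ n a b σ, VK a σ ∨ VL b σ → TorV n a b σ)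
    -- convergence of the Künneth spectral sequence
    -- `E₂^{st} = ⊕_{a+b=t} Tor_{-s}(𝓗^a K, 𝓗^b L) ⇒ 𝓗^{s+t}(K ⊗^L L)`:
    -- if all `E₂`-terms contributing to total degree `q` vanish on a stratum,
    -- then so does `𝓗^q(K ⊗^L L)`
    (hconv : ∀ (q : ℤ) (σ : Strata),
      (∀ s t a b : ℤ, s + t = q → a + b = t → TorV (-s) a b σ) → VKL q σ)
    -- `K, L ∈ ^pD^{≤0}`
    (hK : ∀ (i : ℤ) (σ : Strata), p (dim σ) < i → VK i σ)
    (hL : ∀ (i : ℤ) (σ : Strata), p (dim σ) < i → VL i σ) :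
    (∀ (s t a b : ℤ) (σ : Strata), p (dim σ) < s + t → a + b = t →
        TorV (-s) a b σ) ∧
    (∀ (q : ℤ) (σ : Strata), p (dim σ) < q → VKL q σ) := by
  have main : ∀ (s t a b : ℤ) (σ : Strata), p (dim σ) < s + t → a + b = t →
      TorV (-s) a b σ := by
    intro s t a b σ hst hab
    rcases lt_or_ge 0 s with hs | hs
    · exact hTorNeg _ _ _ _ (by omega)
    · have hpσ := hp (dim σ)
      have : p (dim σ) < a ∨ p (dim σ) < b := by omega
      rcases this with h | h
      · exact hTorZero _ _ _ _ (Or.inl (hK _ _ h))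
      · exact hTorZero _ _ _ _ (Or.inr (hL _ _ h))
  exact ⟨main, fun q σ hq => hconv q σ (fun s t a b hst hab =>
    main s t a b σ (hst ▸ hq) hab)⟩
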